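/- Let s ∈ V₁⊗V₂⊗V₃ and t ∈ W₁⊗W₂⊗W₃ be tensors over ℂ, and let F₁: V₁⊗V₂⊗V₃ → V′₁⊗V′₂ and F₂: W₁⊗W₂⊗W₃ → W′₁⊗W′₂ be linear maps. Then borderrank(s ⊗ t) ≥ [rank(F₁(s)) / max rank(F₁(v₁⊗v₂⊗v₃))] · [rank(F₂(t)) / max rank(F₂(w₁⊗w₂⊗w₃))], where the maxima are over simple tensors and rank denotes matrix rank; i.e., generalised flattening lower bounds on border rank are multiplicative under tensor product. -/

import Mathlib

open scoped BigOperators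

universe u v

noncomputable section

variable {F : Type v}

/-- Tensor rank: the least `r` such that `T` is a sum of `r` simple tensors. -/
def tRank {ι : Type*} [Fintype ι] [DecidableEq ι] {γ : ι → Type*} [∀ i, Fintype (γ i)]
    [Field F] (T : (∀ i, γ i) → F) : ℕ :=
  sInf {r | ∃ v : Fin r → ∀ i, γ i → F, ∀ x, T x = ∑ j, ∏ i, v j i (x i)}

/-- Tensor product of a `ι`-indexed tensor and a `κ`-indexed tensor (no grouping). -/
def tProd [Field F] {ι κ : Type*} {γ : ι → Type u} {δ : κ → Type u}
    (S : (∀ i, γ i) → F) (T : (∀ j, δ j) → F) : (∀ i : ι ⊕ κ, Sum.elim γ δ i) → F :=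
  fun x => S (fun i => x (Sum.inl i)) * T (fun j => x (Sum.inr j))

instance sumElimFintype {ι κ : Type*} {γ : ι → Type u} {δ : κ → Type u}
    [hγ : ∀ i, Fintype (γ i)] [hδ : ∀ j, Fintype (δ j)] :
    ∀ i : ι ⊕ κ, Fintype (Sum.elim γ δ i)
  | Sum.inl i => hγ i
  | Sum.inr j => hδ j

/-- Tensor Kronecker product of two tensors with the same index set. -/
def tKron [Field F] {ι : Type*} {γ δ : ι → Type*}
    (S : (∀ i, γ i) → F) (T : (∀ i, δ i) → F) : (∀ i, γ i × δ i) → F :=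
  fun x => S (fun i => (x i).1) * T (fun i => (x i).2)

/-- `n`-fold tensor product power of a tensor (no grouping), a tensor indexed by `Fin n × ι`. -/
def tPow [Field F] {ι : Type*} {γ : ι → Type*} (T : (∀ i, γ i) → F) (n : ℕ) :
    (∀ p : Fin n × ι, γ p.2) → F :=
  fun x => ∏ j : Fin n, T (fun i => x (j, i))

/-- Restriction `t ≥ s`: `s` is obtained from `t` by applying linear maps on each factor. -/
def Restricts [Field F] {ι : Type*} [Fintype ι] [DecidableEq ι]
    {γ : ι → Type*} {δ : ι → Type*} [∀ i, Fintype (γ i)]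
    (t : (∀ i, γ i) → F) (s : (∀ i, δ i) → F) : Prop :=
  ∃ A : ∀ i, δ i → γ i → F, ∀ x, (∑ y : ∀ i, γ i, (∏ i, A i (x i) (y i)) * t y) = s x

/-- Degeneration `t ⊵_d^e s` with approximation degree `d` and error degree `e`. -/
def Degen [Field F] {ι : Type*} [Fintype ι] [DecidableEq ι]
    {γ : ι → Type*} {δ : ι → Type*} [∀ i, Fintype (γ i)]
    (t : (∀ i, γ i) → F) (s : (∀ i, δ i) → F) (d e : ℕ) : Prop :=
  ∃ A : ∀ i, δ i → γ i → Polynomial F, ∃ s' : Fin e → ((∀ i, δ i) → F),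
    ∀ x, (∑ y : ∀ i, γ i, (∏ i, A i (x i) (y i)) * Polynomial.C (t y)) =
      Polynomial.C (s x) * Polynomial.X ^ d +
      ∑ j : Fin e, Polynomial.C (s' j x) * Polynomial.X ^ (d + 1 + (j : ℕ))

/-- The rank-`r` order-`k` unit tensor `⟨r⟩_k = ∑_j b_j^{⊗k}`. -/
def unitTensor (F : Type v) [Field F] (r k : ℕ) : (Fin k → Fin r) → F :=
  fun x => ∑ j : Fin r, ∏ i : Fin k, if x i = j then 1 else 0

/-- The tensor `W_k = ∑_{type(i)=(k-1,1)} b_{i₁} ⊗ ⋯ ⊗ b_{i_k}` in `(F²)^{⊗k}`. -/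
def Wtensor (F : Type v) [Field F] (k : ℕ) : (Fin k → Fin 2) → F :=
  fun x => if (∑ i, (x i : ℕ)) = 1 then 1 else 0

/-- `R^e(s)`: border rank with error degree at most `e`. -/
def errRank [Field F] {k : ℕ} {γ : Fin k → Type*} [∀ i, Fintype (γ i)]
    (e : ℕ) (s : (∀ i, γ i) → F) : ℕ :=
  sInf {r | ∃ d, Degen (unitTensor F r k) s d e}

/-- `R_d(s)`: border rank with approximation degree `d`. -/
def degRank [Field F] {k : ℕ} {γ : Fin k → Type*} [∀ i, Fintype (γ i)]
    (d : ℕ) (s : (∀ i, γ i) → F) : ℕ :=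
  sInf {r | ∃ e, Degen (unitTensor F r k) s d e}

/-- Border rank over ℂ: the least `r` such that `T` is a limit of tensors of rank `≤ r`. -/
def tBorderRank {ι : Type*} [Fintype ι] [DecidableEq ι] {γ : ι → Type*} [∀ i, Fintype (γ i)]
    (T : (∀ i, γ i) → ℂ) : ℕ :=
  sInf {r | T ∈ closure {T' : (∀ i, γ i) → ℂ | tRank T' ≤ r}}

end

set_option linter.unusedSectionVars false
set_option maxHeartbeats 1000000

namespace FlatteningAux

open Matrix Module Submodule Kronecker

lemma linIndep_rows_det_ne_zero {k : ℕ} (D : Matrix (Fin k) (Fin k) ℂ)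
    (h : LinearIndependent ℂ (fun j => D j)) : D.det ≠ 0 := by
  intro h0
  have hdt : Dᵀ.det = 0 := by rw [Matrix.det_transpose]; exact h0
  obtain ⟨v, hv0, hv⟩ := Matrix.exists_mulVec_eq_zero_iff.2 hdt
  apply hv0
  have := Fintype.linearIndependent_iff.1 h v ?_
  · funext j; exact this j
  · funext i
    have := congrFun hv i
    simpa [Matrix.mulVec, dotProduct, mul_comm, Finset.sum_apply] using this


variable {m n : Type*} [Fintype m] [Fintype n]

/-- Matrix rank is subadditive. -/
lemma matRank_add_le (A B : Matrix m n ℂ) : (A + B).rank ≤ A.rank + B.rank := by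
  rw [Matrix.rank, Matrix.rank, Matrix.rank, Matrix.mulVecLin_add]
  have h1 : LinearMap.range (A.mulVecLin + B.mulVecLin) ≤
      LinearMap.range A.mulVecLin ⊔ LinearMap.range B.mulVecLin := by
    rintro _ ⟨v, rfl⟩
    exact Submodule.mem_sup.2 ⟨_, ⟨v, rfl⟩, _, ⟨v, rfl⟩, rfl⟩
  refine (Submodule.finrank_mono h1).trans ?_
  have := Submodule.finrank_sup_add_finrank_inf_eq (LinearMap.range A.mulVecLin)
    (LinearMap.range B.mulVecLin)
  omega

lemma matRank_sum_le {k : Type*} (s : Finset k) (A : k → Matrix m n ℂ) :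
    (∑ j ∈ s, A j).rank ≤ ∑ j ∈ s, (A j).rank := by
  classical
  induction s using Finset.cons_induction with
  | empty => simp
  | cons a s ha ih =>
    rw [Finset.sum_cons, Finset.sum_cons]
    exact (matRank_add_le _ _).trans (Nat.add_le_add_left ih _)

/-- existence of `k` linearly independent columns -/
lemma exists_linIndep_cols (M : Matrix m n ℂ) {k : ℕ} (h : k ≤ M.rank) :
    ∃ g : Fin k → n, LinearIndependent ℂ (fun j => Mᵀ (g j)) := by
  classical
  rw [Matrix.rank_eq_finrank_span_cols] at h
  obtain ⟨b, hbsub, hspan, hindep⟩ := exists_linearIndependent ℂ (Set.range Mᵀ)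
  haveI : Fintype b := ((Set.finite_range Mᵀ).subset hbsub).fintype
  have hcard : finrank ℂ (span ℂ b) = Fintype.card b := by
    rw [finrank_span_set_eq_card hindep, Set.toFinset_card]
  have hk : k ≤ Fintype.card b := by
    rw [← hcard, hspan]; exact h
  obtain ⟨f⟩ : Nonempty (Fin k ↪ b) := Function.Embedding.nonempty_of_card_le (by simpa using hk)
  have hfam : LinearIndependent ℂ (fun j : Fin k => ((f j : m → ℂ))) :=
    hindep.comp f f.injective
  choose g hg using fun j : Fin k => hbsub (f j).2
  refine ⟨g, ?_⟩
  have : (fun j : Fin k => Mᵀ (g j)) = fun j : Fin k => ((f j : m → ℂ)) := by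
    funext j; exact hg j
  rw [this]; exact hfam

/-- rank ≥ k implies an invertible k×k submatrix exists -/
lemma exists_det_ne_zero [DecidableEq m] (M : Matrix m n ℂ) {k : ℕ} (h : k ≤ M.rank) :
    ∃ (f : Fin k → m) (g : Fin k → n), (M.submatrix f g).det ≠ 0 := by
  classical
  obtain ⟨g, hg⟩ := exists_linIndep_cols M h
  set C : Matrix m (Fin k) ℂ := M.submatrix id g with hCdef
  have hCt : Cᵀ = fun j => Mᵀ (g j) := by funext j i; rfl
  have hC : C.rank = k := by
    rw [Matrix.rank_eq_finrank_span_cols]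
    show finrank ℂ (span ℂ (Set.range Cᵀ)) = k
    rw [hCt, finrank_span_eq_card hg, Fintype.card_fin]
  have hCT : k ≤ Cᵀ.rank := by rw [Matrix.rank_transpose, hC]
  obtain ⟨f, hf⟩ := exists_linIndep_cols Cᵀ hCT
  refine ⟨f, g, ?_⟩
  apply linIndep_rows_det_ne_zero
  have : (fun j => (M.submatrix f g) j) = fun j => Cᵀᵀ (f j) := by
    funext j i; rfl
  rw [this]; exact hf

/-- invertible ι-indexed submatrix implies rank ≥ card ι -/
lemma card_le_rank_of_det {ι : Type*} [Fintype ι] [DecidableEq ι] [DecidableEq m] [DecidableEq n]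
    (M : Matrix m n ℂ) (f : ι → m) (g : ι → n) (h : (M.submatrix f g).det ≠ 0) :
    Fintype.card ι ≤ M.rank := by
  have h1 : (M.submatrix f g).rank = Fintype.card ι :=
    Matrix.rank_of_isUnit _ ((Matrix.isUnit_iff_isUnit_det _).2 (isUnit_iff_ne_zero.2 h))
  have e1 : M.submatrix f id = ((1 : Matrix m m ℂ).submatrix f (Equiv.refl m)) * M := by
    rw [Matrix.one_submatrix_mul]; rfl
  have e2 : M.submatrix f g = (M.submatrix f id) * ((1 : Matrix n n ℂ).submatrix (Equiv.refl n) g) := by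
    rw [Matrix.mul_submatrix_one]; rfl
  calc Fintype.card ι = (M.submatrix f g).rank := h1.symm
    _ ≤ (M.submatrix f id).rank := by rw [e2]; exact Matrix.rank_mul_le_left _ _
    _ ≤ M.rank := by rw [e1]; exact Matrix.rank_mul_le_right _ _
variable {m n p q : Type*} [Fintype m] [Fintype n] [Fintype p] [Fintype q]

/-- rank factorization -/
lemma exists_factorization (A : Matrix m n ℂ) :
    ∃ (C : Matrix m (Fin A.rank) ℂ) (D : Matrix (Fin A.rank) n ℂ), A = C * D := by
  classical
  set W := LinearMap.range A.mulVecLin with hW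
  have hfr : finrank ℂ W = A.rank := rfl
  let b : Basis (Fin A.rank) ℂ W := (finBasis ℂ W).reindex (finCongr hfr)
  have colmem : ∀ x : n, (fun i => A i x) ∈ W := by
    intro x
    refine ⟨Pi.single x 1, ?_⟩
    funext i
    simp [Matrix.mulVecLin, Matrix.mulVec, dotProduct, Pi.single_apply]
  refine ⟨fun i j => (b j : m → ℂ) i, fun j x => b.repr ⟨fun i => A i x, colmem x⟩ j, ?_⟩
  ext i x
  show A i x = ∑ j, (b j : m → ℂ) i * b.repr ⟨fun i => A i x, colmem x⟩ j
  have := b.sum_repr ⟨fun i => A i x, colmem x⟩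
  have h2 := congrFun (congrArg (Subtype.val) this) i
  rw [AddSubmonoidClass.coe_finset_sum] at h2
  simp only [SetLike.val_smul, Finset.sum_apply, Pi.smul_apply, smul_eq_mul] at h2
  rw [← h2]
  exact Finset.sum_congr rfl fun j _ => mul_comm _ _

lemma rank_kronecker_le (A : Matrix m n ℂ) (B : Matrix p q ℂ) :
    (A ⊗ₖ B).rank ≤ A.rank * B.rank := by
  obtain ⟨C₁, D₁, h₁⟩ := exists_factorization A
  obtain ⟨C₂, D₂, h₂⟩ := exists_factorization B
  have key : A ⊗ₖ B = (C₁ ⊗ₖ C₂) * (D₁ ⊗ₖ D₂) := by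
    rw [← Matrix.mul_kronecker_mul, ← h₁, ← h₂]
  rw [key]
  refine (Matrix.rank_mul_le_left _ _).trans ?_
  refine (Matrix.rank_le_card_width _).trans ?_
  simp

lemma le_rank_kronecker [DecidableEq m] [DecidableEq n] [DecidableEq p] [DecidableEq q]
    (A : Matrix m n ℂ) (B : Matrix p q ℂ) :
    A.rank * B.rank ≤ (A ⊗ₖ B).rank := by
  obtain ⟨f₁, g₁, h₁⟩ := exists_det_ne_zero A (le_refl A.rank)
  obtain ⟨f₂, g₂, h₂⟩ := exists_det_ne_zero B (le_refl B.rank)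
  have key : ((A ⊗ₖ B).submatrix (Prod.map f₁ f₂) (Prod.map g₁ g₂)) =
      (A.submatrix f₁ g₁) ⊗ₖ (B.submatrix f₂ g₂) := by
    ext ⟨i₁, i₂⟩ ⟨j₁, j₂⟩; rfl
  have hdet : ((A ⊗ₖ B).submatrix (Prod.map f₁ f₂) (Prod.map g₁ g₂)).det ≠ 0 := by
    rw [key, Matrix.det_kronecker]
    exact mul_ne_zero (pow_ne_zero _ h₁) (pow_ne_zero _ h₂)
  have := card_le_rank_of_det (A ⊗ₖ B) _ _ hdet
  simpa using this
variable {m n : Type*} [Fintype m] [Fintype n] [DecidableEq m] [DecidableEq n]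

lemma isClosed_rank_le (R : ℕ) : IsClosed {M : Matrix m n ℂ | M.rank ≤ R} := by
  rw [← isOpen_compl_iff]
  rw [isOpen_iff_mem_nhds]
  intro M hM
  simp only [Set.mem_compl_iff, Set.mem_setOf_eq, not_le] at hM
  obtain ⟨f, g, hdet⟩ := exists_det_ne_zero M (show R + 1 ≤ M.rank from hM)
  have hcont : Continuous fun M' : Matrix m n ℂ => (M'.submatrix f g).det :=
    (continuous_id.matrix_submatrix f g).matrix_det
  have : {M' : Matrix m n ℂ | (M'.submatrix f g).det ≠ 0} ∈ nhds M :=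
    (hcont.isOpen_preimage {0}ᶜ isOpen_compl_singleton).mem_nhds hdet
  refine Filter.mem_of_superset this ?_
  intro M' hM'
  simp only [Set.mem_compl_iff, Set.mem_setOf_eq, not_le]
  have := card_le_rank_of_det M' f g hM'
  simpa using this


/-- combine two pointings into a pointing of the sum family -/
def combine {ι κ : Type*} {γ : ι → Type u} {δ : κ → Type u}
    (x : ∀ i, γ i) (y : ∀ j, δ j) : ∀ i : ι ⊕ κ, Sum.elim γ δ i
  | Sum.inl i => x i
  | Sum.inr j => y j

open Classical in
/-- dirac delta function -/
noncomputable def dirac {σ : Type*} (y₀ : σ) : σ → ℂ := fun y => if y = y₀ then 1 else 0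

open Classical in
lemma sum_smul_dirac {σ : Type*} [Fintype σ] (t' : σ → ℂ) :
    ∑ y : σ, t' y • dirac y = t' := by
  funext z
  simp only [Finset.sum_apply, Pi.smul_apply, dirac, smul_eq_mul, mul_ite, mul_one, mul_zero]
  simp [Finset.sum_ite_eq]

/-- every tensor has a rank decomposition -/
lemma exists_decomp {ι : Type*} [Fintype ι] [DecidableEq ι] [Nonempty ι]
    {γ : ι → Type*} [∀ i, Fintype (γ i)] (T : (∀ i, γ i) → ℂ) :
    ∃ v : Fin (Fintype.card (∀ i, γ i)) → ∀ i, γ i → ℂ,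
      ∀ x, T x = ∑ j, ∏ i, v j i (x i) := by
  classical
  have i₀ : ι := Classical.arbitrary ι
  let e := (Fintype.equivFin (∀ i, γ i)).symm
  refine ⟨fun j i a => (if i = i₀ then T (e j) else 1) * (if a = e j i then 1 else 0),
    fun x => ?_⟩
  have key : ∀ j, (∏ i, (if i = i₀ then T (e j) else 1) * (if x i = e j i then 1 else 0))
      = T (e j) * (if x = e j then 1 else 0) := by
    intro j
    rw [Finset.prod_mul_distrib]
    congr 1
    · simp
    · by_cases h : x = e j
      · subst h; simp
      · obtain ⟨i, hi⟩ := Function.ne_iff.1 h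
        rw [if_neg h]
        exact Finset.prod_eq_zero (Finset.mem_univ i) (by simp [hi])
  calc T x = ∑ z, T z * (if x = z then 1 else 0) := by
        simp [mul_ite, mul_one, mul_zero]
    _ = ∑ j, T (e j) * (if x = e j then 1 else 0) :=
        (Equiv.sum_comp e fun z => T z * (if x = z then 1 else 0)).symm
    _ = _ := by exact (Finset.sum_congr rfl fun j _ => (key j).symm)

variable {γ δ : Fin 3 → Type u} [∀ i, Fintype (γ i)] [∀ i, Fintype (δ i)]
  {α₁ β₁ α₂ β₂ : Type*} [Fintype α₁] [Fintype β₁] [Fintype α₂] [Fintype β₂]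

/-- the combined flattening map F₁ ⊗ F₂ -/
noncomputable def Gmap (F₁ : ((∀ i, γ i) → ℂ) →ₗ[ℂ] Matrix α₁ β₁ ℂ)
    (F₂ : ((∀ i, δ i) → ℂ) →ₗ[ℂ] Matrix α₂ β₂ ℂ) :
    ((∀ i : Fin 3 ⊕ Fin 3, Sum.elim γ δ i) → ℂ) →ₗ[ℂ] Matrix (α₁ × α₂) (β₁ × β₂) ℂ where
  toFun u := fun p q => ∑ y : ∀ j, δ j,
    F₁ (fun x => u (combine x y)) p.1 q.1 * F₂ (dirac y) p.2 q.2
  map_add' u v := by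
    funext p q
    have h : ∀ y : ∀ j, δ j, (fun x => (u + v) (combine x y)) =
        (fun x => u (combine x y)) + (fun x => v (combine x y)) := fun y => rfl
    simp only [Matrix.add_apply, h, map_add]
    show _ = (∑ y : ∀ j, δ j, F₁ (fun x => u (combine x y)) p.1 q.1 * F₂ (dirac y) p.2 q.2) +
      ∑ y : ∀ j, δ j, F₁ (fun x => v (combine x y)) p.1 q.1 * F₂ (dirac y) p.2 q.2
    rw [← Finset.sum_add_distrib]
    exact Finset.sum_congr rfl fun y _ => by ring
  map_smul' c u := by
    funext p q
    have h : ∀ y : ∀ j, δ j, (fun x => (c • u) (combine x y)) =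
        c • (fun x => u (combine x y)) := fun y => rfl
    simp only [h, _root_.map_smul, RingHom.id_apply, Matrix.smul_apply, smul_eq_mul]
    show _ = c * ∑ y : ∀ j, δ j, F₁ (fun x => u (combine x y)) p.1 q.1 * F₂ (dirac y) p.2 q.2
    rw [Finset.mul_sum]
    exact Finset.sum_congr rfl fun y _ => by ring

lemma Gmap_tProd (F₁ : ((∀ i, γ i) → ℂ) →ₗ[ℂ] Matrix α₁ β₁ ℂ)
    (F₂ : ((∀ i, δ i) → ℂ) →ₗ[ℂ] Matrix α₂ β₂ ℂ)
    (s' : (∀ i, γ i) → ℂ) (t' : (∀ j, δ j) → ℂ) :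
    Gmap F₁ F₂ (tProd s' t') = (F₁ s') ⊗ₖ (F₂ t') := by
  funext p q
  show (∑ y : ∀ j, δ j, F₁ (fun x => tProd s' t' (combine x y)) p.1 q.1
      * F₂ (dirac y) p.2 q.2) = F₁ s' p.1 q.1 * F₂ t' p.2 q.2
  have h1 : ∀ y : ∀ j, δ j, (fun x => tProd s' t' (combine x y)) = t' y • s' := by
    intro y; funext x
    show s' x * t' y = t' y * s' x
    ring
  have h2 : F₂ t' = ∑ y : ∀ j, δ j, t' y • F₂ (dirac y) := by
    calc F₂ t' = F₂ (∑ y : ∀ j, δ j, t' y • dirac y) := by rw [sum_smul_dirac]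
      _ = ∑ y : ∀ j, δ j, F₂ (t' y • dirac y) := map_sum F₂ _ _
      _ = _ := Finset.sum_congr rfl fun y _ => _root_.map_smul F₂ _ _
  rw [h2]
  simp only [h1, _root_.map_smul, Matrix.smul_apply, smul_eq_mul, Finset.sum_apply,
    Matrix.sum_apply]
  rw [Finset.mul_sum]
  exact Finset.sum_congr rfl fun y _ => by ring


theorem main_aux {γ δ : Fin 3 → Type u}
    [∀ i, Fintype (γ i)] [∀ i, Fintype (δ i)]
    {α₁ β₁ α₂ β₂ : Type*} [Fintype α₁] [Fintype β₁] [Fintype α₂] [Fintype β₂]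
    [DecidableEq α₁] [DecidableEq β₁] [DecidableEq α₂] [DecidableEq β₂]
    (s : (∀ i, γ i) → ℂ) (t : (∀ i, δ i) → ℂ)
    (F₁ : ((∀ i, γ i) → ℂ) →ₗ[ℂ] Matrix α₁ β₁ ℂ)
    (F₂ : ((∀ i, δ i) → ℂ) →ₗ[ℂ] Matrix α₂ β₂ ℂ) :
    ((Matrix.rank (F₁ s) : ℝ) /
        (↑(sSup {m : ℕ | ∃ v : ∀ i, γ i → ℂ,
            Matrix.rank (F₁ (fun x => ∏ i, v i (x i))) = m}) : ℝ)) *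
    ((Matrix.rank (F₂ t) : ℝ) /
        (↑(sSup {m : ℕ | ∃ w : ∀ i, δ i → ℂ,
            Matrix.rank (F₂ (fun x => ∏ i, w i (x i))) = m}) : ℝ))
      ≤ (tBorderRank (tProd s t) : ℝ) := by
  classical
  set M₁ := sSup {m : ℕ | ∃ v : ∀ i, γ i → ℂ,
      Matrix.rank (F₁ (fun x => ∏ i, v i (x i))) = m} with hM₁
  set M₂ := sSup {m : ℕ | ∃ w : ∀ i, δ i → ℂ,
      Matrix.rank (F₂ (fun x => ∏ i, w i (x i))) = m} with hM₂
  set B := tBorderRank (tProd s t) with hB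
  -- bounds
  have bdd₁ : BddAbove {m : ℕ | ∃ v : ∀ i, γ i → ℂ,
      Matrix.rank (F₁ (fun x => ∏ i, v i (x i))) = m} :=
    ⟨Fintype.card α₁, by rintro m ⟨v, rfl⟩; exact Matrix.rank_le_card_height _⟩
  have bdd₂ : BddAbove {m : ℕ | ∃ w : ∀ i, δ i → ℂ,
      Matrix.rank (F₂ (fun x => ∏ i, w i (x i))) = m} :=
    ⟨Fintype.card α₂, by rintro m ⟨w, rfl⟩; exact Matrix.rank_le_card_height _⟩
  have mem₁ : ∀ v : ∀ i, γ i → ℂ, (F₁ (fun x => ∏ i, v i (x i))).rank ≤ M₁ :=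
    fun v => le_csSup bdd₁ ⟨v, rfl⟩
  have mem₂ : ∀ w : ∀ i, δ i → ℂ, (F₂ (fun x => ∏ i, w i (x i))).rank ≤ M₂ :=
    fun w => le_csSup bdd₂ ⟨w, rfl⟩
  -- border rank membership
  have hne : {r | tProd s t ∈ closure
      {T' : (∀ i : Fin 3 ⊕ Fin 3, Sum.elim γ δ i) → ℂ | tRank T' ≤ r}}.Nonempty := by
    refine ⟨Fintype.card (∀ i : Fin 3 ⊕ Fin 3, Sum.elim γ δ i), subset_closure ?_⟩
    exact Nat.sInf_le (exists_decomp _)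
  have hBmem : tProd s t ∈ closure
      {T' : (∀ i : Fin 3 ⊕ Fin 3, Sum.elim γ δ i) → ℂ | tRank T' ≤ B} := Nat.sInf_mem hne
  -- the subset inclusion
  have hsub : {T' : (∀ i : Fin 3 ⊕ Fin 3, Sum.elim γ δ i) → ℂ | tRank T' ≤ B} ⊆
      {u | (Gmap F₁ F₂ u).rank ≤ B * (M₁ * M₂)} := by
    intro u hu
    have hmem : tRank u ∈ {r | ∃ v : Fin r → ∀ i : Fin 3 ⊕ Fin 3, Sum.elim γ δ i → ℂ,
        ∀ x, u x = ∑ j, ∏ i, v j i (x i)} := Nat.sInf_mem ⟨_, exists_decomp u⟩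
    obtain ⟨v, hv⟩ := hmem
    have hu_eq : u = ∑ j : Fin (tRank u), (fun x' => ∏ i, v j i (x' i)) := by
      funext x; rw [hv x, Finset.sum_apply]
    have hmap : Gmap F₁ F₂ u = ∑ j : Fin (tRank u),
        Gmap F₁ F₂ (fun x' => ∏ i, v j i (x' i)) :=
      (congrArg (Gmap F₁ F₂) hu_eq).trans (map_sum (Gmap F₁ F₂) _ Finset.univ)
    have : (Gmap F₁ F₂ u).rank ≤ ∑ j : Fin (tRank u),
        (Gmap F₁ F₂ (fun x' => ∏ i, v j i (x' i))).rank := by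
      rw [hmap]
      exact matRank_sum_le _ _
    refine this.trans ?_
    have hterm : ∀ j, (Gmap F₁ F₂ (fun x' => ∏ i, v j i (x' i))).rank ≤ M₁ * M₂ := by
      intro j
      have hsimp : (fun x' : ∀ i : Fin 3 ⊕ Fin 3, Sum.elim γ δ i => ∏ i, v j i (x' i)) =
          tProd (γ := γ) (δ := δ) (fun x => ∏ i : Fin 3, v j (Sum.inl i) (x i))
            (fun y => ∏ i : Fin 3, v j (Sum.inr i) (y i)) := by
        funext x'
        exact Fintype.prod_sum_type _
      rw [hsimp, Gmap_tProd]
      exact (rank_kronecker_le _ _).trans (Nat.mul_le_mul (mem₁ _) (mem₂ _))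
    calc (∑ j : Fin (tRank u), (Gmap F₁ F₂ (fun x' => ∏ i, v j i (x' i))).rank)
        ≤ ∑ _j : Fin (tRank u), M₁ * M₂ := Finset.sum_le_sum fun j _ => hterm j
      _ = tRank u * (M₁ * M₂) := by simp [Finset.sum_const, mul_comm]
      _ ≤ B * (M₁ * M₂) := Nat.mul_le_mul_right _ hu
  -- closedness
  have hclosed : IsClosed {u : (∀ i : Fin 3 ⊕ Fin 3, Sum.elim γ δ i) → ℂ |
      (Gmap F₁ F₂ u).rank ≤ B * (M₁ * M₂)} := by
    have hcont : Continuous (Gmap F₁ F₂) := LinearMap.continuous_of_finiteDimensional _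
    exact (isClosed_rank_le (B * (M₁ * M₂))).preimage hcont
  have hGrank : (Gmap F₁ F₂ (tProd s t)).rank ≤ B * (M₁ * M₂) :=
    closure_minimal hsub hclosed hBmem
  have hlow : (F₁ s).rank * (F₂ t).rank ≤ (Gmap F₁ F₂ (tProd s t)).rank := by
    rw [Gmap_tProd]
    exact le_rank_kronecker _ _
  have key : (F₁ s).rank * (F₂ t).rank ≤ B * (M₁ * M₂) := hlow.trans hGrank
  -- real arithmetic
  rcases Nat.eq_zero_or_pos M₁ with h1 | h1
  · rw [h1]
    simp only [Nat.cast_zero, div_zero, zero_mul]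
    positivity
  rcases Nat.eq_zero_or_pos M₂ with h2 | h2
  · rw [h2]
    simp only [Nat.cast_zero, div_zero, mul_zero]
    positivity
  rw [div_mul_div_comm, div_le_iff₀ (by positivity)]
  have : ((F₁ s).rank * (F₂ t).rank : ℝ) ≤ (B * (M₁ * M₂) : ℕ) := by exact_mod_cast key
  calc ((F₁ s).rank : ℝ) * (F₂ t).rank ≤ (B * (M₁ * M₂) : ℕ) := this
    _ = (B : ℝ) * (M₁ * M₂) := by push_cast; ring

end FlatteningAux

/-- generalised flattening lower bounds on border rank are multiplicative
under the tensor product. -/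
theorem flattening_lower_bound_mult {γ δ : Fin 3 → Type u}
    [∀ i, Fintype (γ i)] [∀ i, Fintype (δ i)]
    {α₁ β₁ α₂ β₂ : Type*} [Fintype α₁] [Fintype β₁] [Fintype α₂] [Fintype β₂]
    [DecidableEq α₁] [DecidableEq β₁] [DecidableEq α₂] [DecidableEq β₂]
    (s : (∀ i, γ i) → ℂ) (t : (∀ i, δ i) → ℂ)
    (F₁ : ((∀ i, γ i) → ℂ) →ₗ[ℂ] Matrix α₁ β₁ ℂ)
    (F₂ : ((∀ i, δ i) → ℂ) →ₗ[ℂ] Matrix α₂ β₂ ℂ) :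
    ((Matrix.rank (F₁ s) : ℝ) /
        (↑(sSup {m : ℕ | ∃ v : ∀ i, γ i → ℂ,
            Matrix.rank (F₁ (fun x => ∏ i, v i (x i))) = m}) : ℝ)) *
    ((Matrix.rank (F₂ t) : ℝ) /
        (↑(sSup {m : ℕ | ∃ w : ∀ i, δ i → ℂ,
            Matrix.rank (F₂ (fun x => ∏ i, w i (x i))) = m}) : ℝ))
      ≤ (tBorderRank (tProd s t) : ℝ) := by
  exact FlatteningAux.main_aux s t F₁ F₂
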